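/- K-dimensional Rouché root: let (B⁽¹⁾,...,B⁽ᴷ⁾) be nonnegative random variables with P(B⁽¹⁾ ≥ B⁽²⁾ ≥ ... ≥ B⁽ᴷ⁾) = 1 and P(B⁽ʲ⁻¹⁾ > B⁽ʲ⁾) > 0, let φ be their joint LST and λ > 0. Then for each j with 2 ≤ j ≤ K and all s₁,...,s_{j-1} with positive real parts, there is a unique S_j = S_j(s₁,...,s_{j-1}) with Re(s₁+...+s_{j-1}+S_j) > 0 satisfying λφ(s₁,...,s_{j-1},S_j,0,...,0) = λ - (s₁+...+s_{j-1}+S_j). -/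

import Mathlib

open MeasureTheory

lemma exp_sub_one_norm_le (u : ℂ) :
    ‖Complex.exp u - 1‖ ≤ ‖u‖ * Real.exp (max u.re 0) := by
  have hderiv : ∀ t ∈ Set.uIcc (0:ℝ) 1,
      HasDerivAt (fun t : ℝ => Complex.exp ((t:ℂ) * u)) (Complex.exp ((t:ℂ)*u) * u) t := by
    intro t _
    have h1 : HasDerivAt (fun z : ℂ => Complex.exp (z * u)) (Complex.exp ((t:ℂ)*u) * u) (t:ℂ) := by
      have := ((hasDerivAt_id ((t:ℂ))).mul_const u).cexp
      simpa using this
    exact h1.comp_ofReal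
  have hint : IntervalIntegrable (fun t : ℝ => Complex.exp ((t:ℂ)*u) * u) MeasureTheory.volume 0 1 := by
    apply Continuous.intervalIntegrable
    continuity
  have heq := intervalIntegral.integral_eq_sub_of_hasDerivAt hderiv hint
  simp only [Complex.ofReal_one, Complex.ofReal_zero, one_mul, zero_mul, Complex.exp_zero] at heq
  have hb : ‖∫ t in (0:ℝ)..1, Complex.exp ((t:ℂ)*u) * u‖ ≤ (Real.exp (max u.re 0) * ‖u‖) * |1 - 0| := by
    apply intervalIntegral.norm_integral_le_of_norm_le_const
    intro t ht
    rw [Set.uIoc_of_le (by norm_num : (0:ℝ) ≤ 1)] at ht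
    have h0 : (0:ℝ) < t := ht.1
    have h1 : t ≤ 1 := ht.2
    rw [norm_mul, Complex.norm_exp]
    have : ((t:ℂ) * u).re = t * u.re := by simp [Complex.mul_re]
    rw [this]
    have hle : t * u.re ≤ max u.re 0 := by
      rcases le_or_gt 0 u.re with h | h
      · exact le_trans (by nlinarith) (le_max_left _ _)
      · exact le_trans (by nlinarith) (le_max_right _ _)
    exact mul_le_mul_of_nonneg_right (Real.exp_le_exp.2 hle) (norm_nonneg u)
  rw [← heq]
  calc ‖∫ t in (0:ℝ)..1, Complex.exp ((t:ℂ)*u) * u‖ ≤ (Real.exp (max u.re 0) * ‖u‖) * |1 - 0| := hb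
    _ = ‖u‖ * Real.exp (max u.re 0) := by
        rw [show |(1:ℝ) - 0| = 1 by norm_num]; ring

lemma exp_sub_exp_norm_le (w₁ w₂ : ℂ) :
    ‖Complex.exp w₁ - Complex.exp w₂‖ ≤ ‖w₁ - w₂‖ * Real.exp (max w₁.re w₂.re) := by
  have h := exp_sub_one_norm_le (w₁ - w₂)
  have key : Complex.exp w₁ - Complex.exp w₂ = Complex.exp w₂ * (Complex.exp (w₁ - w₂) - 1) := by
    rw [mul_sub, mul_one, ← Complex.exp_add]; ring_nf
  rw [key, norm_mul, Complex.norm_exp]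
  calc Real.exp w₂.re * ‖Complex.exp (w₁ - w₂) - 1‖
      ≤ Real.exp w₂.re * (‖w₁ - w₂‖ * Real.exp (max (w₁ - w₂).re 0)) := by
        exact mul_le_mul_of_nonneg_left h (Real.exp_pos _).le
    _ = ‖w₁ - w₂‖ * (Real.exp w₂.re * Real.exp (max (w₁-w₂).re 0)) := by ring
    _ = ‖w₁ - w₂‖ * Real.exp (w₂.re + max (w₁-w₂).re 0) := by rw [Real.exp_add]
    _ ≤ ‖w₁ - w₂‖ * Real.exp (max w₁.re w₂.re) := by
        apply mul_le_mul_of_nonneg_left _ (norm_nonneg _)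
        apply Real.exp_le_exp.2
        rw [Complex.sub_re]
        rcases le_total w₂.re w₁.re with h' | h'
        · rw [max_eq_left (by linarith : (0:ℝ) ≤ w₁.re - w₂.re), max_eq_left h']; linarith
        · rw [max_eq_right (by linarith : w₁.re - w₂.re ≤ (0:ℝ)), max_eq_right h']; linarith

lemma real_exp_sub_exp_le (x y : ℝ) :
    |Real.exp x - Real.exp y| ≤ |x - y| * Real.exp (max x y) := by
  have := exp_sub_exp_norm_le (x:ℂ) (y:ℂ)
  simpa [← Complex.ofReal_exp, ← Complex.ofReal_sub, Complex.norm_real, Real.norm_eq_abs] using this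

lemma mul_exp_neg_le (ε x : ℝ) (hε : 0 < ε) (hx : 0 ≤ x) :
    x * Real.exp (-(ε * x)) ≤ (Real.exp 1 * ε)⁻¹ := by
  have h1 : ε * x ≤ Real.exp (ε * x - 1) := by
    have := Real.add_one_le_exp (ε * x - 1); linarith
  have h2 : Real.exp (ε*x - 1) = Real.exp (ε*x) / Real.exp 1 := by
    rw [Real.exp_sub]
  have hpos : 0 < Real.exp (ε * x) := Real.exp_pos _
  rw [Real.exp_neg]
  rw [h2] at h1
  have hx' : x ≤ Real.exp (ε*x) / (Real.exp 1 * ε) := by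
    rw [le_div_iff₀ (Real.exp_pos 1)] at h1
    rw [le_div_iff₀ (by positivity)]
    nlinarith
  calc x * (Real.exp (ε*x))⁻¹ ≤ (Real.exp (ε*x) / (Real.exp 1 * ε)) * (Real.exp (ε*x))⁻¹ :=
        mul_le_mul_of_nonneg_right hx' (by positivity)
    _ = (Real.exp 1 * ε)⁻¹ := by field_simp


set_option maxHeartbeats 3200000 in
lemma rouche_core {Ω : Type*} [MeasurableSpace Ω] (μ : Measure Ω) [IsProbabilityMeasure μ]
    (lam : ℝ) (hlam : 0 < lam)
    (b : Ω → ℝ) (hbm : Measurable b) (hbn : ∀ ω, 0 ≤ b ω)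
    (h : Ω → ℂ) (hhm : Measurable h)
    (hr : ∀ᵐ ω ∂μ, (h ω).re ≤ 0)
    (hneg : 0 < μ {ω | (h ω).re < 0}) :
    ∃! z : ℂ, 0 < z.re ∧
      (lam : ℂ) * ∫ ω, Complex.exp (h ω - z * b ω) ∂μ = (lam : ℂ) - z := by
  have hrm : Measurable fun ω => (h ω).re := Complex.measurable_re.comp hhm
  have hem : ∀ δ : ℝ, Measurable fun ω => Real.exp ((h ω).re - δ * b ω) :=
    fun δ => Real.measurable_exp.comp (hrm.sub (hbm.const_mul δ))
  -- integrability of the real exponential integrands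
  have hei : ∀ δ : ℝ, 0 ≤ δ → Integrable (fun ω => Real.exp ((h ω).re - δ * b ω)) μ := by
    intro δ hδ
    refine Integrable.mono' (integrable_const 1) ((hem δ).aestronglyMeasurable) ?_
    filter_upwards [hr] with ω hω
    rw [Real.norm_eq_abs, abs_of_nonneg (Real.exp_pos _).le]
    have hle : (h ω).re - δ * b ω ≤ 0 := by nlinarith [hbn ω]
    have := Real.exp_le_exp.2 hle
    simpa using this
  set c : ℝ → ℝ := fun δ => ∫ ω, Real.exp ((h ω).re - δ * b ω) ∂μ with hcdef
  have hc_nonneg : ∀ δ, 0 ≤ c δ := fun δ => integral_nonneg (fun ω => (Real.exp_pos _).le)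
  have hc_mono : ∀ δ₁ δ₂, δ₁ ≤ δ₂ → 0 ≤ δ₁ → c δ₂ ≤ c δ₁ := by
    intro δ₁ δ₂ h12 h1
    apply integral_mono_ae (hei δ₂ (le_trans h1 h12)) (hei δ₁ h1)
    filter_upwards with ω
    exact Real.exp_le_exp.2 (by nlinarith [hbn ω])
  have hc0_lt : c 0 < 1 := by
    have hint0 : Integrable (fun ω => Real.exp ((h ω).re - 0 * b ω)) μ := hei 0 le_rfl
    have hint : Integrable (fun ω => 1 - Real.exp ((h ω).re - 0 * b ω)) μ :=
      (integrable_const 1).sub hint0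
    have hpos : 0 < ∫ ω, (1 - Real.exp ((h ω).re - 0 * b ω)) ∂μ := by
      rw [integral_pos_iff_support_of_nonneg_ae ?_ hint]
      · refine lt_of_lt_of_le hneg (measure_mono ?_)
        intro ω hω
        simp only [Set.mem_setOf_eq] at hω
        simp only [Function.mem_support]
        have hlt : Real.exp ((h ω).re - 0 * b ω) < 1 := by
          rw [zero_mul, sub_zero]
          calc Real.exp (h ω).re < Real.exp 0 := Real.exp_lt_exp.2 hω
            _ = 1 := Real.exp_zero
        intro heq
        linarith [heq]
      · filter_upwards [hr] with ω hω
        have hle : (h ω).re - 0 * b ω ≤ 0 := by nlinarith [hbn ω]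
        have := Real.exp_le_exp.2 hle
        simp only [Real.exp_zero] at this
        simp only [Pi.zero_apply]
        linarith
    have heq : ∫ ω, (1 - Real.exp ((h ω).re - 0 * b ω)) ∂μ = 1 - c 0 := by
      rw [integral_sub (integrable_const 1) hint0, integral_const, probReal_univ,
        one_smul]
    linarith [heq ▸ hpos]
  set ε : ℝ := lam * (1 - c 0) with hεdef
  have hεpos : 0 < ε := by
    rw [hεdef]; nlinarith
  have hεlam : ε ≤ lam := by
    rw [hεdef]; nlinarith [hc_nonneg 0]
  -- Lipschitz continuity of c on [ε, lam]
  have hclip : ∀ δ₁ ∈ Set.Icc ε lam, ∀ δ₂ ∈ Set.Icc ε lam,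
      |c δ₁ - c δ₂| ≤ (Real.exp 1 * ε)⁻¹ * |δ₁ - δ₂| := by
    intro δ₁ h1 δ₂ h2
    have hδ1 : 0 ≤ δ₁ := le_trans hεpos.le h1.1
    have hδ2 : 0 ≤ δ₂ := le_trans hεpos.le h2.1
    have hi1 := hei δ₁ hδ1
    have hi2 := hei δ₂ hδ2
    rw [hcdef]
    simp only
    rw [← integral_sub hi1 hi2]
    calc |∫ ω, (Real.exp ((h ω).re - δ₁ * b ω) - Real.exp ((h ω).re - δ₂ * b ω)) ∂μ|
        ≤ ∫ ω, |Real.exp ((h ω).re - δ₁ * b ω) - Real.exp ((h ω).re - δ₂ * b ω)| ∂μ :=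
          by simpa [Real.norm_eq_abs] using
            norm_integral_le_integral_norm
              (fun ω => Real.exp ((h ω).re - δ₁ * b ω) - Real.exp ((h ω).re - δ₂ * b ω)) (μ := μ)
      _ ≤ ∫ _, (Real.exp 1 * ε)⁻¹ * |δ₁ - δ₂| ∂μ := by
          apply integral_mono_ae ((hi1.sub hi2).abs) (integrable_const _)
          filter_upwards [hr] with ω hω
          simp only [Pi.sub_apply]
          have key := real_exp_sub_exp_le ((h ω).re - δ₁ * b ω) ((h ω).re - δ₂ * b ω)
          have e1 : |((h ω).re - δ₁ * b ω) - ((h ω).re - δ₂ * b ω)| = |δ₁ - δ₂| * b ω := by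
            rw [show ((h ω).re - δ₁ * b ω) - ((h ω).re - δ₂ * b ω) = -((δ₁ - δ₂) * b ω) by ring]
            rw [abs_neg, abs_mul, abs_of_nonneg (hbn ω)]
          have e2 : max ((h ω).re - δ₁ * b ω) ((h ω).re - δ₂ * b ω) ≤ -(ε * b ω) := by
            apply max_le <;> nlinarith [hbn ω, h1.1, h2.1]
          calc |Real.exp ((h ω).re - δ₁ * b ω) - Real.exp ((h ω).re - δ₂ * b ω)|
              ≤ |δ₁ - δ₂| * b ω * Real.exp (max ((h ω).re - δ₁ * b ω) ((h ω).re - δ₂ * b ω)) := by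
                rw [← e1]; exact key
            _ ≤ |δ₁ - δ₂| * b ω * Real.exp (-(ε * b ω)) := by
                apply mul_le_mul_of_nonneg_left (Real.exp_le_exp.2 e2)
                  (mul_nonneg (abs_nonneg _) (hbn ω))
            _ = |δ₁ - δ₂| * (b ω * Real.exp (-(ε * b ω))) := by ring
            _ ≤ |δ₁ - δ₂| * (Real.exp 1 * ε)⁻¹ := by
                apply mul_le_mul_of_nonneg_left (mul_exp_neg_le ε (b ω) hεpos (hbn ω))
                  (abs_nonneg _)
            _ = (Real.exp 1 * ε)⁻¹ * |δ₁ - δ₂| := by ring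
      _ = (Real.exp 1 * ε)⁻¹ * |δ₁ - δ₂| := by
          rw [integral_const]; simp [measure_univ]
  have hccont : ContinuousOn c (Set.Icc ε lam) := by
    apply LipschitzOnWith.continuousOn (K := Real.toNNReal ((Real.exp 1 * ε)⁻¹))
    apply LipschitzOnWith.of_dist_le_mul
    intro x hx y hy
    rw [Real.dist_eq, Real.dist_eq, Real.coe_toNNReal _ (by positivity)]
    exact hclip x hx y hy
  -- the fixed point δs of δ ↦ lam - lam * c δ
  obtain ⟨δs, hδsmem, hδsfix⟩ : ∃ δs ∈ Set.Icc ε lam, lam - lam * c δs - δs = 0 := by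
    have hGcont : ContinuousOn (fun δ => lam - lam * c δ - δ) (Set.Icc ε lam) :=
      (continuousOn_const.sub (continuousOn_const.mul hccont)).sub continuousOn_id
    have himg := intermediate_value_Icc' hεlam hGcont
    have h0mem : (0:ℝ) ∈ Set.Icc (lam - lam * c lam - lam) (lam - lam * c ε - ε) := by
      constructor
      · nlinarith [hc_nonneg lam]
      · have := hc_mono 0 ε hεpos.le le_rfl
        nlinarith
    obtain ⟨δs, hmem, heq⟩ := himg h0mem
    exact ⟨δs, hmem, heq⟩
  have hδspos : 0 < δs := lt_of_lt_of_le hεpos hδsmem.1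
  have hcs : lam * c δs = lam - δs := by linarith
  have hc0eq : lam * c 0 = lam - ε := by rw [hεdef]; ring
  -- the Lipschitz constant
  have hbem : Measurable fun ω => b ω * Real.exp ((h ω).re - δs * b ω) := hbm.mul (hem δs)
  have hbei : Integrable (fun ω => b ω * Real.exp ((h ω).re - δs * b ω)) μ := by
    refine Integrable.mono' (integrable_const ((Real.exp 1 * δs)⁻¹)) hbem.aestronglyMeasurable ?_
    filter_upwards [hr] with ω hω
    rw [Real.norm_eq_abs, abs_of_nonneg (mul_nonneg (hbn ω) (Real.exp_pos _).le)]
    calc b ω * Real.exp ((h ω).re - δs * b ω)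
        ≤ b ω * Real.exp (-(δs * b ω)) :=
          mul_le_mul_of_nonneg_left (Real.exp_le_exp.2 (by linarith)) (hbn ω)
      _ ≤ (Real.exp 1 * δs)⁻¹ := mul_exp_neg_le δs (b ω) hδspos (hbn ω)
  set L : ℝ := lam * ∫ ω, b ω * Real.exp ((h ω).re - δs * b ω) ∂μ with hLdef
  have hIL_nonneg : 0 ≤ ∫ ω, b ω * Real.exp ((h ω).re - δs * b ω) ∂μ :=
    integral_nonneg fun ω => mul_nonneg (hbn ω) (Real.exp_pos _).le
  have hL0 : 0 ≤ L := mul_nonneg hlam.le hIL_nonneg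
  have hL1 : L < 1 := by
    have key : ∀ᵐ ω ∂μ, δs * (b ω * Real.exp ((h ω).re - δs * b ω))
        ≤ Real.exp ((h ω).re - 0 * b ω) - Real.exp ((h ω).re - δs * b ω) := by
      filter_upwards with ω
      have ht : δs * b ω + 1 ≤ Real.exp (δs * b ω) := Real.add_one_le_exp _
      have hexp : Real.exp ((h ω).re - 0 * b ω)
          = Real.exp ((h ω).re - δs * b ω) * Real.exp (δs * b ω) := by
        rw [← Real.exp_add]; ring_nf
      rw [hexp]
      nlinarith [Real.exp_pos ((h ω).re - δs * b ω)]
    have hmono := integral_mono_ae (hbei.const_mul δs)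
      ((hei 0 le_rfl).sub (hei δs hδspos.le)) key
    simp only [Pi.sub_apply] at hmono
    rw [integral_const_mul, integral_sub (hei 0 le_rfl) (hei δs hδspos.le)] at hmono
    -- δs * I ≤ c 0 - c δs
    have hIneq : δs * ∫ ω, b ω * Real.exp ((h ω).re - δs * b ω) ∂μ ≤ c 0 - c δs := hmono
    have hδL : δs * L ≤ δs - ε := by
      have : lam * (δs * ∫ ω, b ω * Real.exp ((h ω).re - δs * b ω) ∂μ)
          ≤ lam * (c 0 - c δs) := mul_le_mul_of_nonneg_left hIneq hlam.le
      rw [hLdef]; nlinarith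
    nlinarith
  -- the map F
  set F : ℂ → ℂ := fun z => (lam:ℂ) - (lam:ℂ) * ∫ ω, Complex.exp (h ω - z * b ω) ∂μ with hFdef
  have hfm : ∀ z : ℂ, AEStronglyMeasurable (fun ω => Complex.exp (h ω - z * b ω)) μ := fun z =>
    (Complex.measurable_exp.comp
      (hhm.sub ((Complex.measurable_ofReal.comp hbm).const_mul z))).aestronglyMeasurable
  have hfnorm : ∀ (z : ℂ) (ω : Ω),
      ‖Complex.exp (h ω - z * b ω)‖ = Real.exp ((h ω).re - z.re * b ω) := by
    intro z ω
    rw [Complex.norm_exp]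
    congr 1
    simp [Complex.sub_re, Complex.mul_re]
  have hfi : ∀ z : ℂ, 0 ≤ z.re → Integrable (fun ω => Complex.exp (h ω - z * b ω)) μ := by
    intro z hz
    refine Integrable.mono' (hei z.re hz) (hfm z) ?_
    filter_upwards with ω
    rw [hfnorm]
  have hnormint : ∀ z : ℂ, 0 ≤ z.re →
      ‖∫ ω, Complex.exp (h ω - z * b ω) ∂μ‖ ≤ c z.re := by
    intro z hz
    calc ‖∫ ω, Complex.exp (h ω - z * b ω) ∂μ‖
        ≤ ∫ ω, ‖Complex.exp (h ω - z * b ω)‖ ∂μ := norm_integral_le_integral_norm _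
      _ = c z.re := integral_congr_ae (Filter.Eventually.of_forall fun ω => hfnorm z ω)
  have hFre : ∀ z : ℂ, δs ≤ z.re → δs ≤ (F z).re := by
    intro z hz
    have h1 : ‖∫ ω, Complex.exp (h ω - z * b ω) ∂μ‖ ≤ c δs :=
      le_trans (hnormint z (le_trans hδspos.le hz)) (hc_mono δs z.re hz hδspos.le)
    have h2 : (F z).re = lam - lam * (∫ ω, Complex.exp (h ω - z * b ω) ∂μ).re := by
      simp [hFdef, Complex.sub_re, Complex.mul_re, Complex.ofReal_re, Complex.ofReal_im]
    rw [h2]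
    have h3 : (∫ ω, Complex.exp (h ω - z * b ω) ∂μ).re
        ≤ ‖∫ ω, Complex.exp (h ω - z * b ω) ∂μ‖ := Complex.re_le_norm _
    nlinarith
  have hFlip : ∀ z₁ z₂ : ℂ, δs ≤ z₁.re → δs ≤ z₂.re → ‖F z₁ - F z₂‖ ≤ L * ‖z₁ - z₂‖ := by
    intro z₁ z₂ h1 h2
    have hz1 : (0:ℝ) ≤ z₁.re := le_trans hδspos.le h1
    have hz2 : (0:ℝ) ≤ z₂.re := le_trans hδspos.le h2
    have hdiff : F z₁ - F z₂
        = (lam:ℂ) * ∫ ω, (Complex.exp (h ω - z₂ * b ω) - Complex.exp (h ω - z₁ * b ω)) ∂μ := by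
      rw [hFdef]
      simp only
      rw [integral_sub (hfi z₂ hz2) (hfi z₁ hz1)]
      ring
    rw [hdiff, norm_mul]
    have hnl : ‖(lam:ℂ)‖ = lam := by
      rw [Complex.norm_real, Real.norm_eq_abs, abs_of_pos hlam]
    rw [hnl]
    calc lam * ‖∫ ω, (Complex.exp (h ω - z₂ * b ω) - Complex.exp (h ω - z₁ * b ω)) ∂μ‖
        ≤ lam * ∫ ω, ‖Complex.exp (h ω - z₂ * b ω) - Complex.exp (h ω - z₁ * b ω)‖ ∂μ :=
          mul_le_mul_of_nonneg_left (norm_integral_le_integral_norm _) hlam.le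
      _ ≤ lam * ∫ ω, ‖z₁ - z₂‖ * (b ω * Real.exp ((h ω).re - δs * b ω)) ∂μ := by
          apply mul_le_mul_of_nonneg_left _ hlam.le
          apply integral_mono_ae ((hfi z₂ hz2).sub (hfi z₁ hz1)).norm (hbei.const_mul _)
          filter_upwards [hr] with ω hω
          simp only [Pi.sub_apply]
          have key := exp_sub_exp_norm_le (h ω - z₂ * b ω) (h ω - z₁ * b ω)
          have e1 : ‖(h ω - z₂ * b ω) - (h ω - z₁ * b ω)‖ = ‖z₁ - z₂‖ * b ω := by
            rw [show (h ω - z₂ * (b ω:ℂ)) - (h ω - z₁ * (b ω:ℂ)) = (z₁ - z₂) * (b ω:ℂ) by ring]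
            rw [norm_mul, Complex.norm_real, Real.norm_eq_abs, abs_of_nonneg (hbn ω)]
          have e2 : max (h ω - z₂ * b ω).re (h ω - z₁ * b ω).re ≤ (h ω).re - δs * b ω := by
            have r2 : (h ω - z₂ * (b ω:ℂ)).re = (h ω).re - z₂.re * b ω := by
              simp [Complex.sub_re, Complex.mul_re]
            have r1 : (h ω - z₁ * (b ω:ℂ)).re = (h ω).re - z₁.re * b ω := by
              simp [Complex.sub_re, Complex.mul_re]
            rw [r1, r2]
            apply max_le <;> nlinarith [hbn ω]
          calc ‖Complex.exp (h ω - z₂ * b ω) - Complex.exp (h ω - z₁ * b ω)‖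
              ≤ ‖(h ω - z₂ * b ω) - (h ω - z₁ * b ω)‖
                  * Real.exp (max (h ω - z₂ * b ω).re (h ω - z₁ * b ω).re) := key
            _ ≤ ‖z₁ - z₂‖ * b ω * Real.exp ((h ω).re - δs * b ω) := by
                rw [e1]
                exact mul_le_mul_of_nonneg_left (Real.exp_le_exp.2 e2)
                  (mul_nonneg (norm_nonneg _) (hbn ω))
            _ = ‖z₁ - z₂‖ * (b ω * Real.exp ((h ω).re - δs * b ω)) := by ring
      _ = L * ‖z₁ - z₂‖ := by
          rw [integral_const_mul, hLdef]; ring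
  -- Banach fixed point on the closed half-plane
  have hCclosed : IsClosed {z : ℂ | δs ≤ z.re} :=
    isClosed_le continuous_const Complex.continuous_re
  haveI hCcomp := hCclosed.completeSpace_coe
  haveI hCne : Nonempty {z : ℂ | δs ≤ z.re} :=
    ⟨⟨(lam:ℂ), by simpa [Set.mem_setOf_eq, Complex.ofReal_re] using hδsmem.2⟩⟩
  set Ft : {z : ℂ | δs ≤ z.re} → {z : ℂ | δs ≤ z.re} := fun z => ⟨F z, hFre z z.2⟩ with hFt
  have hcontr : ContractingWith (Real.toNNReal L) Ft := by
    constructor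
    · simp [Real.toNNReal_lt_one, hL1]
    · rw [lipschitzWith_iff_dist_le_mul]
      intro x y
      rw [Subtype.dist_eq, Subtype.dist_eq, dist_eq_norm, dist_eq_norm,
        Real.coe_toNNReal _ hL0]
      exact hFlip x y x.2 y.2
  have huniq : ∀ z₁ z₂ : ℂ, δs ≤ z₁.re → δs ≤ z₂.re → F z₁ = z₁ → F z₂ = z₂ → z₁ = z₂ := by
    intro z₁ z₂ h1 h2 hf1 hf2
    have hle := hFlip z₁ z₂ h1 h2
    rw [hf1, hf2] at hle
    rcases eq_or_lt_of_le (norm_nonneg (z₁ - z₂)) with hn | hn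
    · exact sub_eq_zero.mp (norm_eq_zero.mp hn.symm)
    · exfalso; nlinarith [mul_pos (sub_pos.mpr hL1) hn]
  obtain ⟨zs, hzsmem, hzsfix⟩ : ∃ z : ℂ, δs ≤ z.re ∧ F z = z := by
    have hfp := hcontr.fixedPoint_isFixedPt
    exact ⟨(ContractingWith.fixedPoint Ft hcontr : {z : ℂ | δs ≤ z.re}),
      (ContractingWith.fixedPoint Ft hcontr).2,
      congrArg Subtype.val hfp⟩
  -- every solution lies in the half-plane
  have hsol : ∀ z : ℂ,
      (0 < z.re ∧ (lam : ℂ) * ∫ ω, Complex.exp (h ω - z * b ω) ∂μ = (lam : ℂ) - z) →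
      δs ≤ z.re ∧ F z = z := by
    rintro z ⟨hz, heq⟩
    have hFz : F z = z := by
      rw [hFdef]
      simp only
      rw [heq]
      ring
    refine ⟨?_, hFz⟩
    by_contra hlt
    push_neg at hlt
    set t : ℝ := z.re with htdef
    set θ : ℝ := t / δs with hθdef
    have hθ0 : 0 < θ := div_pos hz hδspos
    have hθ1 : θ < 1 := (div_lt_one hδspos).2 hlt
    have hθδ : θ * δs = t := by
      rw [hθdef]; field_simp
    -- chord bound via convexity of exp
    have hchord : c t ≤ (1 - θ) * c 0 + θ * c δs := by
      have hae : ∀ᵐ ω ∂μ, Real.exp ((h ω).re - t * b ω)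
          ≤ (1 - θ) * Real.exp ((h ω).re - 0 * b ω) + θ * Real.exp ((h ω).re - δs * b ω) := by
        filter_upwards with ω
        have hcx := convexOn_exp.2 (Set.mem_univ ((h ω).re - 0 * b ω))
          (Set.mem_univ ((h ω).re - δs * b ω)) (by linarith : (0:ℝ) ≤ 1 - θ)
          hθ0.le (by ring)
        have harg : (1 - θ) • ((h ω).re - 0 * b ω) + θ • ((h ω).re - δs * b ω)
            = (h ω).re - t * b ω := by
          simp only [smul_eq_mul]
          linear_combination (-(b ω)) * hθδ
        rw [harg] at hcx
        simpa [smul_eq_mul] using hcx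
      have := integral_mono_ae (hei t hz.le)
        (((hei 0 le_rfl).const_mul (1 - θ)).add ((hei δs hδspos.le).const_mul θ)) hae
      simp only [Pi.add_apply] at this
      rwa [integral_add ((hei 0 le_rfl).const_mul (1 - θ)) ((hei δs hδspos.le).const_mul θ),
        integral_const_mul, integral_const_mul] at this
    have hre' : z.re = lam - lam * (∫ ω, Complex.exp (h ω - z * b ω) ∂μ).re := by
      conv_lhs => rw [← hFz]
      simp [hFdef, Complex.sub_re, Complex.mul_re, Complex.ofReal_re, Complex.ofReal_im]
    have h3 : (∫ ω, Complex.exp (h ω - z * b ω) ∂μ).re ≤ c t :=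
      le_trans (Complex.re_le_norm _) (hnormint z hz.le)
    have hge : z.re ≥ lam - lam * c t := by
      rw [hre']
      have := mul_le_mul_of_nonneg_left h3 hlam.le
      linarith
    -- lam - lam * c t ≥ (1-θ)ε + t > t : contradiction
    have e1 : lam * ((1 - θ) * c 0 + θ * c δs) = (1 - θ) * (lam - ε) + θ * (lam - δs) := by
      linear_combination (1 - θ) * hc0eq + θ * hcs
    have hmul : lam * c t ≤ lam * ((1 - θ) * c 0 + θ * c δs) :=
      mul_le_mul_of_nonneg_left hchord hlam.le
    have h4 : (1 - θ) * ε ≤ 0 := by nlinarith [hθδ, hge, hmul, e1]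
    nlinarith [mul_pos (show (0:ℝ) < 1 - θ by linarith) hεpos]
  -- conclusion
  refine ⟨zs, ⟨lt_of_lt_of_le hδspos hzsmem, ?_⟩, ?_⟩
  · have h5 := hzsfix
    rw [hFdef] at h5
    simp only at h5
    linear_combination -h5
  · rintro y ⟨hy1, hy2⟩
    obtain ⟨hymem, hyfix⟩ := hsol y ⟨hy1, hy2⟩
    exact huniq y zs hymem hzsmem hyfix hzsfix

set_option maxHeartbeats 1600000 in
/-- K-dimensional Rouché root: for a.s. ordered nonnegative claims
`B⁽¹⁾ ≥ ... ≥ B⁽ᴷ⁾` with `P(B⁽ʲ⁻¹⁾ > B⁽ʲ⁾) > 0`, joint LST `φ` and `λ > 0`: for each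
`2 ≤ j ≤ K` and all `s₁,...,s_{j-1}` with positive real parts, there is a unique `S_j`
with `Re(s₁+...+s_{j-1}+S_j) > 0` such that
`λ φ(s₁,...,s_{j-1},S_j,0,...,0) = λ - (s₁+...+s_{j-1}+S_j)`.
(Book `i` is represented by the index `i-1 : Fin K`.) -/
theorem stmt14 {Ω : Type*} [MeasurableSpace Ω] (μ : Measure Ω) [IsProbabilityMeasure μ]
    (K : ℕ) (hK : 2 ≤ K) (B : Fin K → Ω → ℝ)
    (hBm : ∀ i, Measurable (B i)) (hBn : ∀ i ω, 0 ≤ B i ω)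
    (hord : ∀ᵐ ω ∂μ, ∀ i j : Fin K, i ≤ j → B j ω ≤ B i ω)
    (lam : ℝ) (hlam : 0 < lam)
    (φ : (Fin K → ℂ) → ℂ)
    (hφ : ∀ sv : Fin K → ℂ, φ sv = ∫ ω, Complex.exp (-∑ i, sv i * B i ω) ∂μ)
    (j : ℕ) (hj2 : 2 ≤ j) (hjK : j ≤ K)
    (hstrict : 0 < μ {ω | B ⟨j - 1, by omega⟩ ω < B ⟨j - 2, by omega⟩ ω})
    (s : ℕ → ℂ) (hs : ∀ i < j - 1, 0 < (s i).re) :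
    ∃! S : ℂ,
      0 < ((∑ i ∈ Finset.range (j - 1), s i) + S).re ∧
      (lam : ℂ) * φ (fun i => if (i : ℕ) < j - 1 then s i
                              else if (i : ℕ) = j - 1 then S else 0)
        = (lam : ℂ) - ((∑ i ∈ Finset.range (j - 1), s i) + S) := by
  have hj1K : j - 1 < K := by omega
  have hj2K : j - 2 < K := by omega
  set jm1 : Fin K := ⟨j - 1, hj1K⟩ with hjm1
  set jm2 : Fin K := ⟨j - 2, hj2K⟩ with hjm2
  have hjm1v : ((jm1 : Fin K) : ℕ) = j - 1 := rfl
  have hjm2v : ((jm2 : Fin K) : ℕ) = j - 2 := rfl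
  set σc : ℂ := ∑ i ∈ Finset.range (j - 1), s i with hσc
  set b : Ω → ℝ := B jm1 with hbdef
  set W : Ω → ℂ := fun ω => ∑ i : Fin K, (if (i : ℕ) < j - 1 then s i else 0) * (B i ω : ℂ)
    with hWdef
  set h : Ω → ℂ := fun ω => σc * (b ω : ℂ) - W ω with hhdef
  have hWm : Measurable W := by
    rw [hWdef]
    apply Finset.measurable_sum
    intro i _
    exact (Complex.measurable_ofReal.comp (hBm i)).const_mul _
  have hhm : Measurable h := by
    rw [hhdef]
    exact ((Complex.measurable_ofReal.comp (hBm jm1)).const_mul σc).sub hWm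
  have hσc' : σc = ∑ i : Fin K, (if (i : ℕ) < j - 1 then s i else 0) := by
    rw [hσc, Fin.sum_univ_eq_sum_range (fun i => if i < j - 1 then s i else 0) K]
    calc ∑ i ∈ Finset.range (j - 1), s i
        = ∑ i ∈ Finset.range (j - 1), (if i < j - 1 then s i else 0) :=
          Finset.sum_congr rfl (fun x hx => (if_pos (Finset.mem_range.1 hx)).symm)
      _ = ∑ i ∈ Finset.range K, (if i < j - 1 then s i else 0) :=
          Finset.sum_subset (Finset.range_subset_range.2 (by omega))
            (fun x _ hx => if_neg (by simpa [Finset.mem_range] using hx))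
  -- sum splitting
  have hsum : ∀ (S : ℂ) (ω : Ω),
      (∑ i : Fin K, (if (i : ℕ) < j - 1 then s i else if (i : ℕ) = j - 1 then S else 0)
        * (B i ω : ℂ)) = W ω + S * (b ω : ℂ) := by
    intro S ω
    have h2 : S * (b ω : ℂ) = ∑ i : Fin K, (if i = jm1 then S * (B i ω : ℂ) else 0) := by
      rw [Finset.sum_ite_eq' Finset.univ jm1 (fun i => S * (B i ω : ℂ))]
      simp [hbdef]
    rw [hWdef, h2]
    simp only
    rw [← Finset.sum_add_distrib]
    apply Finset.sum_congr rfl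
    intro i _
    have hiff : i = jm1 ↔ (i : ℕ) = j - 1 := by
      rw [Fin.ext_iff, hjm1v]
    by_cases h1 : (i : ℕ) < j - 1
    · rw [if_pos h1, if_pos h1, if_neg (fun hc => absurd (hiff.1 hc) (by omega)), add_zero]
    · rw [if_neg h1, if_neg h1, zero_mul, zero_add]
      by_cases h2' : (i : ℕ) = j - 1
      · rw [if_pos h2', if_pos (hiff.2 h2')]
      · rw [if_neg h2', if_neg (fun hc => h2' (hiff.1 hc)), zero_mul]
  -- real part of h
  have hre : ∀ ω, (h ω).re
      = ∑ i : Fin K, (if (i : ℕ) < j - 1 then (s i).re else 0) * (b ω - B i ω) := by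
    intro ω
    have h1 : h ω = ∑ i : Fin K,
        (if (i : ℕ) < j - 1 then s i else 0) * (((b ω - B i ω : ℝ)) : ℂ) := by
      rw [hhdef]
      simp only
      rw [hσc', Finset.sum_mul, ← Finset.sum_sub_distrib]
      apply Finset.sum_congr rfl
      intro i _
      push_cast
      ring
    rw [h1, Complex.re_sum]
    apply Finset.sum_congr rfl
    intro i _
    split_ifs with hi
    · simp [Complex.mul_re]
    · simp
  have hr : ∀ᵐ ω ∂μ, (h ω).re ≤ 0 := by
    filter_upwards [hord] with ω hω
    rw [hre ω]
    apply Finset.sum_nonpos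
    intro i _
    split_ifs with hi
    · have hble : B jm1 ω ≤ B i ω := hω i jm1 (by rw [Fin.le_def, hjm1v]; omega)
      have hspos := (hs i hi).le
      have : b ω - B i ω ≤ 0 := by rw [hbdef]; linarith
      exact mul_nonpos_of_nonneg_of_nonpos hspos this
    · simp
  have hneg : 0 < μ {ω | (h ω).re < 0} := by
    have hsubset : {ω | B jm1 ω < B jm2 ω} ∩ {ω | ∀ i k : Fin K, i ≤ k → B k ω ≤ B i ω}
        ⊆ {ω | (h ω).re < 0} := by
      rintro ω ⟨h1, h2⟩
      simp only [Set.mem_setOf_eq] at h1 h2 ⊢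
      rw [hre ω]
      have hterm : (if ((jm2 : Fin K) : ℕ) < j - 1 then (s ((jm2 : Fin K) : ℕ)).re else 0)
          * (b ω - B jm2 ω) < 0 := by
        rw [if_pos (by rw [hjm2v]; omega)]
        apply mul_neg_of_pos_of_neg (hs _ (by rw [hjm2v]; omega))
        rw [hbdef]; linarith
      have hsplit := Finset.add_sum_erase Finset.univ
        (fun i : Fin K => (if (i : ℕ) < j - 1 then (s i).re else 0) * (b ω - B i ω))
        (Finset.mem_univ jm2)
      rw [← hsplit]
      show (if ((jm2 : Fin K) : ℕ) < j - 1 then (s ((jm2 : Fin K) : ℕ)).re else 0)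
          * (b ω - B jm2 ω)
        + ∑ i ∈ Finset.univ.erase jm2,
            (if (i : ℕ) < j - 1 then (s i).re else 0) * (b ω - B i ω) < 0
      have hrest : ∑ i ∈ Finset.univ.erase jm2,
          (if (i : ℕ) < j - 1 then (s i).re else 0) * (b ω - B i ω) ≤ 0 := by
        apply Finset.sum_nonpos
        intro i _
        split_ifs with hi
        · have hble : B jm1 ω ≤ B i ω := h2 i jm1 (by rw [Fin.le_def, hjm1v]; omega)
          apply mul_nonpos_of_nonneg_of_nonpos (hs i hi).le
          rw [hbdef]; linarith
        · simp
      linarith [hterm]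
    have hstrict' : 0 < μ {ω | B jm1 ω < B jm2 ω} := hstrict
    have hnull : μ ({ω | B jm1 ω < B jm2 ω}
        \ {ω | ∀ i k : Fin K, i ≤ k → B k ω ≤ B i ω}) = 0 := by
      apply measure_mono_null (fun ω hω => hω.2)
      have := hord
      rw [MeasureTheory.ae_iff] at this
      exact this
    have hle : μ {ω | B jm1 ω < B jm2 ω}
        ≤ μ ({ω | B jm1 ω < B jm2 ω} ∩ {ω | ∀ i k : Fin K, i ≤ k → B k ω ≤ B i ω})
          + μ ({ω | B jm1 ω < B jm2 ω}
              \ {ω | ∀ i k : Fin K, i ≤ k → B k ω ≤ B i ω}) :=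
      measure_le_inter_add_diff μ _ _
    rw [hnull, add_zero] at hle
    exact lt_of_lt_of_le (lt_of_lt_of_le hstrict' hle) (measure_mono hsubset)
  obtain ⟨z, ⟨hz1, hz2⟩, hzu⟩ :=
    rouche_core μ lam hlam b (hBm jm1) (fun ω => hBn jm1 ω) h hhm hr hneg
  have hphi : ∀ S : ℂ,
      φ (fun i => if (i : ℕ) < j - 1 then s i else if (i : ℕ) = j - 1 then S else 0)
        = ∫ ω, Complex.exp (h ω - (σc + S) * (b ω : ℂ)) ∂μ := by
    intro S
    rw [hφ]
    apply integral_congr_ae (Filter.Eventually.of_forall ?_)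
    intro ω
    congr 1
    rw [hsum S ω, hhdef]
    simp only
    ring
  refine ⟨z - σc, ⟨?_, ?_⟩, ?_⟩
  · rw [show σc + (z - σc) = z by ring]
    exact hz1
  · rw [hphi, show σc + (z - σc) = z by ring, hz2]
  · rintro y ⟨hy1, hy2⟩
    rw [hphi] at hy2
    have := hzu (σc + y) ⟨hy1, hy2⟩
    linear_combination this
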